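/- arXiv:2307.13271 — 4 statements merged into one kernel-verified Lean document; each statement's English description precedes it below -/
import Mathlib

section
/- Let G be a simple graph and σ ⊆ V(G). If every 3-element subset of σ is a simplex of F_1(G) (i.e., induces a forest with maximum degree ≤ 1), then σ itself is a simplex of F_1(G). -/
/-- A finite vertex set spans a simplex of the `d`-forest complex if it induces an
acyclic subgraph all of whose vertices have at most `d` neighbours inside the set
(`d = ⊤` imposes no degree bound, giving `F_∞`). -/
def forestSimplex {V : Type*} (G : SimpleGraph V) (d : ℕ∞) (σ : Finset V) : Prop :=
  (SimpleGraph.induce (σ : Set V) G).IsAcyclic ∧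
    ∀ v ∈ σ, (({u | u ∈ σ ∧ G.Adj v u} : Set V).ncard : ℕ∞) ≤ d

/-- The `d`-forest complex `F_d(G)` of a graph `G`, as a set of finite simplices. -/
def forestComplex {V : Type*} (G : SimpleGraph V) (d : ℕ∞) : Set (Finset V) :=
  {σ | forestSimplex G d σ}

/-- If every `3`-element subset of `σ` is a simplex of `F_1(G)`, then `σ` itself is a
simplex of `F_1(G)`. -/
theorem mem_forestComplex_one_of_triples {V : Type*} (G : SimpleGraph V) (σ : Finset V)
    (h : ∀ τ ⊆ σ, τ.card = 3 → τ ∈ forestComplex G 1) :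
    σ ∈ forestComplex G 1 := by
  classical
  -- Key: every vertex of σ has at most one neighbour inside σ.
  have degOne : ∀ v ∈ σ, ∀ u ∈ σ, ∀ w ∈ σ, G.Adj v u → G.Adj v w → u = w := by
    intro v hv u hu w hw hvu hvw
    by_contra hne
    set τ : Finset V := {v, u, w} with hτ
    have hsub : τ ⊆ σ := by
      intro x hx
      simp only [hτ, Finset.mem_insert, Finset.mem_singleton] at hx
      rcases hx with rfl | rfl | rfl <;> assumption
    have hcard : τ.card = 3 := by
      rw [hτ, Finset.card_insert_of_notMem (by simp [hvu.ne, hvw.ne]),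
        Finset.card_insert_of_notMem (by simp [hne]), Finset.card_singleton]
    obtain ⟨-, hdeg⟩ := h τ hsub hcard
    have hvτ : v ∈ τ := by simp [hτ]
    have hle := hdeg v hvτ
    have hsubset : ({u, w} : Set V) ⊆ {x | x ∈ τ ∧ G.Adj v x} := by
      intro x hx
      rcases hx with rfl | rfl
      · exact ⟨by simp [hτ], hvu⟩
      · exact ⟨by simp [hτ], hvw⟩
    have hfin : ({x | x ∈ τ ∧ G.Adj v x} : Set V).Finite :=
      (τ.finite_toSet).subset (fun x hx => hx.1)
    have h2 : 2 ≤ ({x | x ∈ τ ∧ G.Adj v x} : Set V).ncard := by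
      have := Set.ncard_le_ncard hsubset hfin
      rwa [Set.ncard_pair hne] at this
    have : ({x | x ∈ τ ∧ G.Adj v x} : Set V).ncard ≤ 1 := by exact_mod_cast hle
    omega
  refine ⟨?_, ?_⟩
  · -- acyclicity
    set H := SimpleGraph.induce (σ : Set V) G with hH
    have deg1 : ∀ a b c : (σ : Set V), H.Adj a b → H.Adj a c → b = c := by
      intro a b c hab hac
      exact Subtype.ext (degOne a a.2 b b.2 c c.2 hab hac)
    intro v p hp
    cases p with
    | nil => exact hp.ne_nil rfl
    | cons h' q =>
      rw [SimpleGraph.Walk.cons_isCycle_iff] at hp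
      obtain ⟨hq, he⟩ := hp
      -- q : H.Walk b v, with h' : H.Adj v b; b ≠ v
      obtain ⟨x, h₂, r, hrev⟩ := SimpleGraph.Walk.exists_eq_cons_of_ne h'.ne q.reverse
      -- h₂ : H.Adj v x
      have hbx := deg1 _ _ _ h' h₂
      subst hbx
      exact he (by
        rw [← List.mem_reverse, ← SimpleGraph.Walk.edges_reverse, hrev]
        exact List.mem_cons_self)
  · -- degree bound
    intro v hv
    have hsub : ({u | u ∈ σ ∧ G.Adj v u} : Set V).Subsingleton := by
      intro a ha b hb
      exact degOne v hv a ha.1 b hb.1 ha.2 hb.2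
    have hfin : ({u | u ∈ σ ∧ G.Adj v u} : Set V).Finite :=
      (σ.finite_toSet).subset (fun x hx => hx.1)
    have : ({u | u ∈ σ ∧ G.Adj v u} : Set V).ncard ≤ 1 :=
      (Set.ncard_le_one hfin).mpr (fun a ha b hb => hsub ha hb)
    exact_mod_cast this
end

section
/- If v is a vertex of a graph G contained in no cycle of G, then F_∞(G) is a cone with apex v, hence contractible; in particular F_∞(G) = {v} * F_∞(G − v). -/
/-- The geometric realization of a simplicial complex on a finite vertex set. -/
abbrev realization {V : Type*} [Fintype V] (K : Set (Finset V)) : Type _ :=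
  { f : V → ℝ // (∀ v, 0 ≤ f v) ∧ (∑ v, f v) = 1 ∧ ∃ σ ∈ K, {v | f v ≠ 0} ⊆ ↑σ }

/-- The `q`-dimensional sphere. -/
abbrev Sphere (q : ℕ) : Type := ↥(Metric.sphere (0 : EuclideanSpace ℝ (Fin (q+1))) 1)

/-- A base point of the `q`-sphere. -/
noncomputable abbrev spherePt (q : ℕ) : Sphere q :=
  ⟨EuclideanSpace.single 0 1, by simp [EuclideanSpace.norm_single]⟩

/-- The wedge of `k` copies of the `q`-sphere (a point if `k = 0`), as a quotient of
the disjoint union of a point and `k` spheres identifying the base points. -/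
noncomputable abbrev Wedge (k q : ℕ) : Type :=
  Quot (fun x y : Unit ⊕ (Fin k × Sphere q) =>
    (x = Sum.inl () ∨ ∃ i, x = Sum.inr (i, spherePt q)) ∧
    (y = Sum.inl () ∨ ∃ i, y = Sum.inr (i, spherePt q)))

/-- Lift a walk whose support lies in `s` to the induced subgraph on `s`. -/
def liftWalk {V : Type*} {G : SimpleGraph V} {s : Set V} :
    ∀ {a b : V} (p : G.Walk a b) (hp : ∀ x ∈ p.support, x ∈ s),
      (G.induce s).Walk ⟨a, hp a p.start_mem_support⟩ ⟨b, hp b p.end_mem_support⟩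
  | _, _, SimpleGraph.Walk.nil, _ => SimpleGraph.Walk.nil
  | _, _, SimpleGraph.Walk.cons h q, hp =>
      SimpleGraph.Walk.cons (by exact h)
        (liftWalk q fun x hx => hp x (by simp [SimpleGraph.Walk.support_cons, hx]))

lemma liftWalk_map {V : Type*} {G : SimpleGraph V} {s : Set V} :
    ∀ {a b : V} (p : G.Walk a b) (hp : ∀ x ∈ p.support, x ∈ s),
      (liftWalk p hp).map (SimpleGraph.Embedding.induce s).toHom = p
  | _, _, SimpleGraph.Walk.nil, _ => rfl
  | _, _, SimpleGraph.Walk.cons h q, hp => by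
      simp only [liftWalk, SimpleGraph.Walk.map_cons]
      exact congrArg (SimpleGraph.Walk.cons h) (liftWalk_map q _)

/-- If a graph has no cycle with support inside `s`, then the induced graph on `s`
is acyclic. -/
lemma induce_isAcyclic_of_no_cycle {V : Type*} {G : SimpleGraph V} {s : Set V}
    (h : ∀ (u : V) (c : G.Walk u u), c.IsCycle → ¬ (∀ x ∈ c.support, x ∈ s)) :
    (G.induce s).IsAcyclic := by
  intro u c hc
  have hinj : Function.Injective (SimpleGraph.Embedding.induce (G := G) s).toHom :=
    Subtype.val_injective
  have hc' : (c.map (SimpleGraph.Embedding.induce s).toHom).IsCycle := hc.map hinj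
  refine h _ _ hc' ?_
  intro x hx
  rw [SimpleGraph.Walk.support_map, List.mem_map] at hx
  obtain ⟨y, _, rfl⟩ := hx
  exact y.2

/-- Conversely: a cycle in `G` with support in `s` lifts to the induced graph on `s`. -/
lemma not_induce_isAcyclic_of_cycle {V : Type*} {G : SimpleGraph V} {s : Set V}
    {u : V} (c : G.Walk u u) (hc : c.IsCycle) (hs : ∀ x ∈ c.support, x ∈ s) :
    ¬ (G.induce s).IsAcyclic := by
  intro hacy
  have hinj : Function.Injective (SimpleGraph.Embedding.induce (G := G) s).toHom :=
    Subtype.val_injective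
  have : ((liftWalk c hs).map (SimpleGraph.Embedding.induce s).toHom).IsCycle := by
    rw [liftWalk_map c hs]; exact hc
  exact hacy _ ((SimpleGraph.Walk.map_isCycle_iff_of_injective hinj).mp this)

/-- If the vertex `v` lies on no cycle of `G`, then `F_∞(G)` is a cone with apex `v`
(equivalently `F_∞(G) = {v} * F_∞(G − v)`), hence contractible. -/
theorem forestComplex_cone_of_no_cycle {V : Type*} [Fintype V] [DecidableEq V]
    (G : SimpleGraph V) (v : V)
    (h : ∀ (u : V) (c : G.Walk u u), c.IsCycle → v ∉ c.support) :
    (∀ σ ∈ forestComplex G ⊤, insert v σ ∈ forestComplex G ⊤) ∧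
      ContractibleSpace (realization (forestComplex G ⊤)) := by
  have cone : ∀ σ ∈ forestComplex G ⊤, insert v σ ∈ forestComplex G ⊤ := by
    intro σ hσ
    refine ⟨?_, fun _ _ => le_top⟩
    refine induce_isAcyclic_of_no_cycle ?_
    intro u c hc hsup
    -- every vertex of c lies in σ, since v ∉ c.support
    have hsub : ∀ x ∈ c.support, x ∈ (σ : Set V) := by
      intro x hx
      have hxs := hsup x hx
      have hxv : x ≠ v := fun hxv => h u c hc (hxv ▸ hx)
      simpa [hxv] using hxs
    exact not_induce_isAcyclic_of_cycle c hc hsub hσ.1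
  refine ⟨cone, ?_⟩
  -- the empty set is a simplex, hence so is {v}
  have hempty : (∅ : Finset V) ∈ forestComplex G ⊤ := by
    refine ⟨fun u _ _ => absurd u.2 (by simp), fun u hu => by simp at hu⟩
  have hv : ({v} : Finset V) ∈ forestComplex G ⊤ := by
    simpa using cone ∅ hempty
  -- base point: the vertex v
  set K := forestComplex G ⊤ with hK
  have hx0 : (∀ u, 0 ≤ (fun u => if u = v then (1:ℝ) else 0) u) ∧
      (∑ u, (fun u => if u = v then (1:ℝ) else 0) u) = 1 ∧
      ∃ σ ∈ K, {u | (fun u => if u = v then (1:ℝ) else 0) u ≠ 0} ⊆ ↑σ := by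
    refine ⟨fun u => by positivity, by simp, ⟨{v}, hv, ?_⟩⟩
    intro u hu
    simp only [Set.mem_setOf_eq, ne_eq, ite_eq_right_iff, not_forall] at hu
    simp [hu.1]
  set x0 : realization K := ⟨_, hx0⟩ with hx0def
  rw [contractible_iff_id_nullhomotopic]
  refine ⟨x0, ⟨?_⟩⟩
  -- the straight-line homotopy towards x0
  have key : ∀ (t : unitInterval) (x : realization K),
      (∀ u, 0 ≤ (1 - (t:ℝ)) * x.1 u + (if u = v then (t:ℝ) else 0)) ∧
      (∑ u, ((1 - (t:ℝ)) * x.1 u + (if u = v then (t:ℝ) else 0))) = 1 ∧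
      ∃ σ ∈ K, {u | (1 - (t:ℝ)) * x.1 u + (if u = v then (t:ℝ) else 0) ≠ 0} ⊆ ↑σ := by
    intro t x
    obtain ⟨hpos, hsum, σ, hσK, hσ⟩ := x.2
    refine ⟨fun u => add_nonneg (mul_nonneg (by simpa using t.2.2) (hpos u))
      (by split_ifs; exacts [t.2.1, le_refl 0]), ?_, ⟨insert v σ, cone σ hσK, ?_⟩⟩
    · rw [Finset.sum_add_distrib, ← Finset.mul_sum, hsum, Finset.sum_ite_eq']
      simp
    · intro u hu
      simp only [Set.mem_setOf_eq] at hu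
      rcases eq_or_ne u v with rfl | huv
      · simp
      · simp only [huv, if_false, add_zero] at hu
        have : x.1 u ≠ 0 := fun h0 => hu (by simp [h0])
        exact Finset.mem_coe.mpr (Finset.mem_insert_of_mem (hσ this))
  refine ⟨⟨fun p => ⟨fun u => (1 - (p.1:ℝ)) * p.2.1 u + (if u = v then (p.1:ℝ) else 0),
      key p.1 p.2⟩, ?_⟩, ?_, ?_⟩
  · apply Continuous.subtype_mk
    apply continuous_pi
    intro u
    have h1 : Continuous fun p : unitInterval × realization K => (p.1 : ℝ) :=
      continuous_subtype_val.comp continuous_fst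
    have h2 : Continuous fun p : unitInterval × realization K => p.2.1 u :=
      ((continuous_apply u).comp continuous_subtype_val).comp continuous_snd
    exact (((continuous_const.sub h1).mul h2).add (by
      split_ifs
      · exact h1
      · exact continuous_const))
  · intro x
    ext u
    simp
  · intro x
    ext u
    simp [hx0def]
end

section
/- Let G be a graph on n vertices with finite girth g(G). Then the reduced homology H̃_i(F_∞(G)) vanishes for all i < g(G) − 2. -/
/-- The boundary map of the augmented ordered simplicial chain complex on the vertex
type `V` : chains generated by `(q+1)`-tuples map to chains generated by `q`-tuples.
(For `q = 0` this is the augmentation map.) -/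
noncomputable def orderedBoundary (V : Type*) (q : ℕ) :
    ((Fin (q+1) → V) →₀ ℤ) →ₗ[ℤ] ((Fin q → V) →₀ ℤ) :=
  Finsupp.lift _ ℤ _
    (fun g => ∑ i : Fin (q+1), ((-1 : ℤ)^(i : ℕ)) • Finsupp.single (g ∘ i.succAbove) 1)

/-- Ordered chains supported on tuples whose vertex set is a simplex of `K`. -/
noncomputable def orderedChains {V : Type*} [DecidableEq V] (K : Set (Finset V)) (q : ℕ) :
    Submodule ℤ ((Fin q → V) →₀ ℤ) :=
  Finsupp.supported ℤ ℤ {g | Finset.image g Finset.univ ∈ K}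

/-- Reduced cycles of the complex `K` in dimension `q` (chains on `q+1` vertices; for
`q = 0` the boundary is the augmentation, so this yields *reduced* homology below). -/
noncomputable def reducedCycles {V : Type*} [DecidableEq V] (K : Set (Finset V)) (q : ℕ) :
    Submodule ℤ ((Fin (q+1) → V) →₀ ℤ) :=
  orderedChains K (q+1) ⊓ LinearMap.ker (orderedBoundary V q)

/-- Boundaries of the complex `K` in dimension `q`. -/
noncomputable def reducedBoundaries {V : Type*} [DecidableEq V] (K : Set (Finset V)) (q : ℕ) :
    Submodule ℤ ((Fin (q+1) → V) →₀ ℤ) :=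
  Submodule.map (orderedBoundary V (q+1)) (orderedChains K (q+2))

/-- The `q`-th reduced simplicial homology group (with integer coefficients) of the
complex `K`, via the ordered simplicial chain complex. -/
noncomputable abbrev reducedHomology {V : Type*} [DecidableEq V] (K : Set (Finset V))
    (q : ℕ) : Type _ :=
  (reducedCycles K q) ⧸
    (Submodule.comap (reducedCycles K q).subtype (reducedBoundaries K q))

/-- The cone map sending a tuple to the tuple with `v0` prepended. -/
noncomputable def coneMap {V : Type*} (v0 : V) (q : ℕ) :
    ((Fin q → V) →₀ ℤ) →ₗ[ℤ] ((Fin (q+1) → V) →₀ ℤ) :=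
  Finsupp.lmapDomain ℤ ℤ (fun g => (Fin.cons v0 g : Fin (q+1) → V))

lemma orderedBoundary_single {V : Type*} (q : ℕ) (g : Fin (q+1) → V) :
    orderedBoundary V q (Finsupp.single g 1) =
      ∑ i : Fin (q+1), ((-1 : ℤ)^(i : ℕ)) • Finsupp.single (g ∘ i.succAbove) 1 := by
  simp [orderedBoundary]

lemma cone_homotopy {V : Type*} (v0 : V) (q : ℕ) :
    (orderedBoundary V (q+1)).comp (coneMap v0 (q+1))
      + (coneMap v0 q).comp (orderedBoundary V q) = LinearMap.id := by
  apply Finsupp.lhom_ext'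
  intro g
  ext : 1
  simp only [LinearMap.comp_apply, LinearMap.add_apply, Finsupp.lsingle_apply,
    LinearMap.id_apply, coneMap, Finsupp.lmapDomain_apply, Finsupp.mapDomain_single,
    orderedBoundary_single]
  rw [Fin.sum_univ_succ]
  have h0 : (Fin.cons v0 g ∘ (0 : Fin (q+2)).succAbove) = g := by
    funext k
    simp [Fin.succAbove_zero]
  have hsucc : ∀ j : Fin (q+1),
      (Fin.cons v0 g ∘ (Fin.succ j).succAbove) = Fin.cons v0 (g ∘ j.succAbove) := by
    intro j
    funext k
    cases k using Fin.cases with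
    | zero => simp [Fin.succ_succAbove_zero]
    | succ m => simp [Fin.succ_succAbove_succ]
  rw [h0]
  simp only [hsucc, Fin.val_succ, pow_succ, map_sum, LinearMap.map_smul,
    Finsupp.mapDomain_single]
  simp only [Finsupp.mapDomain_finset_sum, Finsupp.mapDomain_smul, Finsupp.mapDomain_single,
    pow_zero, one_smul]
  rw [add_assoc, ← Finset.sum_add_distrib]
  simp only [mul_neg_one, neg_smul, neg_add_cancel, Finset.sum_const_zero, add_zero]
  simp

lemma small_sets_acyclic {V : Type*} [Fintype V] [DecidableEq V] (G : SimpleGraph V)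
    (σ : Finset V) (h : (σ.card : ℕ∞) < G.egirth) :
    (SimpleGraph.induce (σ : Set V) G).IsAcyclic := by
  intro v c hc
  have hmap : (c.map (SimpleGraph.Embedding.induce (σ : Set V)).toHom).IsCycle :=
    hc.map (SimpleGraph.Embedding.induce (G := G) (σ : Set V)).injective
  have hle : G.egirth ≤ ((c.map (SimpleGraph.Embedding.induce (σ : Set V)).toHom).length : ℕ∞) :=
    SimpleGraph.le_egirth.mp le_rfl _ _ hmap
  rw [SimpleGraph.Walk.length_map] at hle
  have hcard : c.length ≤ σ.card := by
    have hnd := hc.support_nodup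
    have hlen : c.support.tail.length = c.length := by
      have h1 := c.length_support
      simp only [List.length_tail, h1]; omega
    calc c.length = c.support.tail.length := hlen.symm
      _ ≤ Fintype.card (σ : Set V) := hnd.length_le_card
      _ = σ.card := by simp
  have : G.egirth ≤ (σ.card : ℕ∞) := hle.trans (by exact_mod_cast hcard)
  exact absurd this (not_le.mpr h)

/-- For a graph `G` on finitely many vertices with finite girth, the reduced homology
`H̃_i(F_∞(G))` vanishes for all `i < g(G) − 2`. -/
theorem homology_vanish_below_girth {V : Type*} [Fintype V] [DecidableEq V]
    (G : SimpleGraph V) (hg : G.egirth ≠ ⊤) (i : ℕ) (hi : (i : ℕ∞) + 2 < G.egirth) :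
    Subsingleton (reducedHomology (forestComplex G ⊤) i) := by
  -- get a vertex
  have hnA : ¬ G.IsAcyclic := fun h => hg h.egirth_eq_top
  obtain ⟨a, w, hw, -⟩ := SimpleGraph.exists_egirth_eq_length.mpr hnA
  -- all (i+2)-tuples span simplices
  have hfull : orderedChains (forestComplex G ⊤) (i+2) = ⊤ := by
    rw [orderedChains]
    have : {g : Fin (i+2) → V | Finset.image g Finset.univ ∈ forestComplex G ⊤} = Set.univ := by
      ext g
      simp only [Set.mem_setOf_eq, Set.mem_univ, iff_true]
      constructor
      · apply small_sets_acyclic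
        calc ((Finset.image g Finset.univ).card : ℕ∞)
            ≤ ((Finset.univ : Finset (Fin (i+2))).card : ℕ∞) := by
              exact_mod_cast Finset.card_image_le
          _ = (i : ℕ∞) + 2 := by
              rw [Finset.card_univ, Fintype.card_fin]; push_cast; ring
          _ < G.egirth := hi
      · intro v _; exact le_top
    rw [this, Finsupp.supported_univ]
  rw [Submodule.Quotient.subsingleton_iff, eq_top_iff]
  rintro ⟨x, hx⟩ -
  have hker : orderedBoundary V i x = 0 := hx.2
  have hhom := congrArg (fun L => L x) (cone_homotopy a i)
  simp only [LinearMap.add_apply, LinearMap.comp_apply, LinearMap.id_apply, hker,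
    map_zero, add_zero] at hhom
  refine ⟨coneMap a (i+1) x, ?_, hhom⟩
  rw [hfull]; trivial
end

section
/- The complex F_1(P_n) of the path on n vertices is homotopy equivalent to: S^{2r−1} if n = 4r; a point if n = 4r+1 or n = 4r+2; and S^{2r+1} if n = 4r+3. -/
section Aux
variable {V : Type*} [Fintype V] [DecidableEq V]

/-- membership predicate of the realization -/
def rmem (K : Set (Finset V)) (f : V → ℝ) : Prop :=
  (∀ v, 0 ≤ f v) ∧ (∑ v, f v) = 1 ∧ ∃ σ ∈ K, {v | f v ≠ 0} ⊆ ↑σ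

lemma realization_eq (K : Set (Finset V)) : realization K = {f : V → ℝ // rmem K f} := rfl

open ContinuousMap in
lemma cone_contractible (K : Set (Finset V)) (w : V)
    (hcone : ∀ σ ∈ K, insert w σ ∈ K) (hne : ∃ σ, σ ∈ K) :
    ContractibleSpace (realization K) := by
  classical
  obtain ⟨σ₀, hσ₀⟩ := hne
  set δ : V → ℝ := fun x => if x = w then (1:ℝ) else 0 with hδ
  have hδsum : (∑ x, δ x) = 1 := by simp [hδ]
  have hp0 : rmem K δ := by
    refine ⟨fun v => ?_, hδsum, ⟨insert w σ₀, hcone σ₀ hσ₀, ?_⟩⟩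
    · by_cases h : v = w <;> simp [hδ, h]
    · intro x hx
      by_cases h : x = w
      · simp [h]
      · exact absurd (by simp [hδ, h]) hx
  set p0 : realization K := ⟨δ, hp0⟩ with hp0def
  have hnonempty : Nonempty (realization K) := ⟨p0⟩
  rw [contractible_iff_id_nullhomotopic]
  refine ⟨p0, ?_⟩
  have Hmem : ∀ (t : unitInterval) (f : realization K),
      rmem K (fun x => (1 - (t:ℝ)) * f.1 x + (t:ℝ) * δ x) := by
    intro t f
    obtain ⟨hpos, hsum, σ, hσK, hsupp⟩ := f.2
    refine ⟨fun v => ?_, ?_, ⟨insert w σ, hcone σ hσK, ?_⟩⟩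
    · have h1 : 0 ≤ 1 - (t:ℝ) := by linarith [t.2.2]
      have h2 : (0:ℝ) ≤ t := t.2.1
      have h3 : (0:ℝ) ≤ δ v := hp0.1 v
      have h4 := hpos v
      positivity
    · rw [Finset.sum_add_distrib, ← Finset.mul_sum, ← Finset.mul_sum, hsum, hδsum]
      ring
    · intro x hx
      simp only [Set.mem_setOf_eq] at hx
      rw [Finset.coe_insert]
      by_cases h : x = w
      · exact Or.inl h
      · right; apply hsupp
        intro hfx
        apply hx
        simp [hfx, hδ, h]
  refine ⟨⟨⟨fun p => ⟨fun x => (1 - (p.1:ℝ)) * p.2.1 x + (p.1:ℝ) * δ x, Hmem p.1 p.2⟩, ?_⟩, ?_, ?_⟩⟩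
  · apply Continuous.subtype_mk
    apply continuous_pi
    intro x
    have h1 : Continuous fun p : unitInterval × realization K => (p.1 : ℝ) :=
      continuous_subtype_val.comp continuous_fst
    have h2 : Continuous fun p : unitInterval × realization K => p.2.1 x :=
      (continuous_apply x).comp (continuous_subtype_val.comp continuous_snd)
    exact ((continuous_const.sub h1).mul h2).add (h1.mul continuous_const)
  · intro f
    apply Subtype.ext
    funext x
    show (1 - ((0:unitInterval):ℝ)) * f.1 x + ((0:unitInterval):ℝ) * δ x = f.1 x
    norm_num
  · intro f
    apply Subtype.ext
    funext x
    show (1 - ((1:unitInterval):ℝ)) * f.1 x + ((1:unitInterval):ℝ) * δ x = δ x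
    norm_num

open ContinuousMap in
lemma strong_collapse (K : Set (Finset V)) (u v : V) (huv : u ≠ v)
    (hdom : ∀ σ ∈ K, v ∈ σ → insert u σ ∈ K)
    (hdown : ∀ σ ∈ K, ∀ τ, τ ⊆ σ → τ ∈ K) :
    Nonempty (HomotopyEquiv (realization K) (realization {σ ∈ K | v ∉ σ})) := by
  classical
  set K' : Set (Finset V) := {σ ∈ K | v ∉ σ} with hK'
  -- the deformation family
  set Φ : ℝ → (V → ℝ) → (V → ℝ) :=
    fun t f x => f x + (if x = u then t * f v else 0) - (if x = v then t * f v else 0) with hΦ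
  have hΦsum : ∀ (t : ℝ) (f : V → ℝ), (∑ x, Φ t f x) = ∑ x, f x := by
    intro t f
    simp only [hΦ]
    rw [Finset.sum_sub_distrib, Finset.sum_add_distrib]
    rw [Finset.sum_ite_eq' Finset.univ u (fun _ => t * f v),
        Finset.sum_ite_eq' Finset.univ v (fun _ => t * f v)]
    simp
  have hΦpos : ∀ (t : ℝ), 0 ≤ t → t ≤ 1 → ∀ (f : V → ℝ), (∀ x, 0 ≤ f x) →
      ∀ x, 0 ≤ Φ t f x := by
    intro t ht0 ht1 f hf x
    simp only [hΦ]
    rcases eq_or_ne x u with rfl | hxu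
    · rw [if_pos rfl, if_neg huv, sub_zero]
      have := hf x; have := hf v; positivity
    · rw [if_neg hxu]
      rcases eq_or_ne x v with rfl | hxv
      · rw [if_pos rfl]
        have h1 : t * f x ≤ 1 * f x := by
          apply mul_le_mul_of_nonneg_right ht1 (hf x)
        have := hf x; linarith
      · rw [if_neg hxv]; have := hf x; simp [this]
  -- membership of the deformation in K
  have hΦmemK : ∀ (t : ℝ), 0 ≤ t → t ≤ 1 → ∀ f : V → ℝ, rmem K f → rmem K (Φ t f) := by
    intro t ht0 ht1 f hm
    obtain ⟨hpos, hsum, σ, hσK, hsupp⟩ := hm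
    refine ⟨hΦpos t ht0 ht1 f hpos, by rw [hΦsum]; exact hsum, ?_⟩
    by_cases hv : v ∈ σ
    · refine ⟨insert u σ, hdom σ hσK hv, ?_⟩
      intro x hx
      simp only [Set.mem_setOf_eq, hΦ] at hx
      rw [Finset.coe_insert]
      rcases eq_or_ne x u with rfl | hxu
      · exact Or.inl rfl
      · right
        rcases eq_or_ne x v with rfl | hxv
        · exact hv
        · apply hsupp
          intro hfx
          apply hx
          rw [if_neg hxu, if_neg hxv, hfx]; ring
    · -- f v = 0, so Φ t f = f
      have hfv : f v = 0 := by
        by_contra h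
        exact hv (hsupp h)
      refine ⟨σ, hσK, ?_⟩
      intro x hx
      simp only [Set.mem_setOf_eq, hΦ, hfv, mul_zero, ite_self, add_zero, sub_zero] at hx
      exact hsupp hx
  -- membership of the endpoint in K'
  have hΦmemK' : ∀ f : V → ℝ, rmem K f → rmem K' (Φ 1 f) := by
    intro f hm
    obtain ⟨hpos, hsum, σ, hσK, hsupp⟩ := hm
    refine ⟨hΦpos 1 zero_le_one le_rfl f hpos, by rw [hΦsum]; exact hsum, ?_⟩
    by_cases hv : v ∈ σ
    · refine ⟨(insert u σ).erase v, ⟨hdown _ (hdom σ hσK hv) _ (Finset.erase_subset v _),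
        Finset.notMem_erase v _⟩, ?_⟩
      intro x hx
      simp only [Set.mem_setOf_eq, hΦ] at hx
      have hxv : x ≠ v := by
        rintro rfl
        apply hx
        rw [if_neg huv.symm, if_pos rfl]
        ring
      rw [Finset.coe_erase, Finset.coe_insert]
      refine ⟨?_, hxv⟩
      rcases eq_or_ne x u with rfl | hxu
      · exact Or.inl rfl
      · right
        apply hsupp
        intro hfx
        apply hx
        rw [if_neg hxu, if_neg hxv, hfx]; ring
    · have hfv : f v = 0 := by
        by_contra h
        exact hv (hsupp h)
      refine ⟨σ, ⟨hσK, hv⟩, ?_⟩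
      intro x hx
      simp only [Set.mem_setOf_eq, hΦ, hfv, mul_zero, ite_self, add_zero, sub_zero] at hx
      exact hsupp hx
  have hΦcont : ∀ x : V, Continuous fun p : ℝ × (V → ℝ) => Φ p.1 p.2 x := by
    intro x
    have h1 : Continuous fun p : ℝ × (V → ℝ) => p.2 x := (continuous_apply x).comp continuous_snd
    have h2 : Continuous fun p : ℝ × (V → ℝ) => p.1 * p.2 v :=
      continuous_fst.mul ((continuous_apply v).comp continuous_snd)
    simp only [hΦ]
    split_ifs <;> [skip; skip; skip; skip] <;> fun_prop
  -- the retraction map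
  have memK' : ∀ f : realization K, rmem K' (Φ 1 f.1) := fun f => hΦmemK' f.1 f.2
  set ret : realization K → realization K' := fun f => ⟨Φ 1 f.1, memK' f⟩ with hret
  have hretc : Continuous ret := by
    apply Continuous.subtype_mk
    apply continuous_pi
    intro x
    exact (hΦcont x).comp (continuous_const.prodMk continuous_subtype_val)
  set incl : realization K' → realization K := fun f =>
    ⟨f.1, ⟨f.2.1, f.2.2.1, f.2.2.2.choose, f.2.2.2.choose_spec.1.1, f.2.2.2.choose_spec.2⟩⟩
    with hincl
  have hinclc : Continuous incl := Continuous.subtype_mk continuous_subtype_val _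
  have hΦ0 : ∀ f : V → ℝ, Φ 0 f = f := by
    intro f; funext x; simp [hΦ]
  -- homotopy from id to incl ∘ ret
  refine ⟨⟨⟨ret, hretc⟩, ⟨incl, hinclc⟩, ?_, ?_⟩⟩
  · -- (incl ∘ ret) homotopic to id
    constructor
    refine (ContinuousMap.Homotopy.symm ⟨⟨fun p => ⟨Φ (p.1:ℝ) p.2.1,
        hΦmemK (p.1:ℝ) p.1.2.1 p.1.2.2 p.2.1 p.2.2⟩, ?_⟩, ?_, ?_⟩)
    · apply Continuous.subtype_mk
      apply continuous_pi
      intro x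
      exact (hΦcont x).comp ((continuous_subtype_val.comp continuous_fst).prodMk
        (continuous_subtype_val.comp continuous_snd))
    · intro f
      apply Subtype.ext
      show Φ ((0:unitInterval):ℝ) f.1 = f.1
      rw [Set.Icc.coe_zero, hΦ0]
    · intro f
      apply Subtype.ext
      show Φ ((1:unitInterval):ℝ) f.1 = (incl (ret f)).1
      rw [Set.Icc.coe_one]
  · -- ret ∘ incl = id
    have : (ContinuousMap.mk ret hretc).comp ⟨incl, hinclc⟩ = ContinuousMap.id _ := by
      ext f x
      obtain ⟨hpos, hsum, σ, ⟨hσK, hσv⟩, hsupp⟩ := f.2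
      have hfv : f.1 v = 0 := by
        by_contra h
        exact hσv (hsupp h)
      show Φ 1 f.1 x = f.1 x
      simp only [hΦ, hfv, mul_zero, ite_self, add_zero, sub_zero]
    exact this ▸ ContinuousMap.Homotopic.refl _

end Aux

lemma tri {a b c a' b' c' : ℝ} (ha : 0 ≤ a) (hb : 0 ≤ b) (hc : 0 ≤ c)
    (ha' : 0 ≤ a') (hb' : 0 ≤ b') (hc' : 0 ≤ c')
    (h0 : a = 0 ∨ b = 0 ∨ c = 0) (h0' : a' = 0 ∨ b' = 0 ∨ c' = 0)
    (e1 : a - c = a' - c') (e2 : b - c = b' - c') : a = a' ∧ b = b' ∧ c = c' := by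
  rcases h0 with h|h|h <;> rcases h0' with h'|h'|h' <;>
    exact ⟨by linarith, by linarith, by linarith⟩


lemma realization_compactSpace {V : Type*} [Fintype V] (K : Set (Finset V)) :
    CompactSpace (realization K) := by
  classical
  set S := {f : V → ℝ | (∀ v, 0 ≤ f v) ∧ (∑ v, f v) = 1 ∧ ∃ σ ∈ K, {v | f v ≠ 0} ⊆ ↑σ} with hS
  have h1 : S ⊆ Set.univ.pi (fun _ : V => Set.Icc (0:ℝ) 1) := by
    intro f hf v _
    obtain ⟨hpos, hsum, _⟩ := hf
    refine ⟨hpos v, ?_⟩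
    calc f v ≤ ∑ x, f x := Finset.single_le_sum (fun x _ => hpos x) (Finset.mem_univ v)
    _ = 1 := hsum
  have hrw : S = (⋂ v, {f : V → ℝ | 0 ≤ f v}) ∩ {f : V → ℝ | (∑ v, f v) = 1} ∩
      ⋃ σ ∈ K, ⋂ v, {f : V → ℝ | v ∉ σ → f v = 0} := by
    ext f
    simp only [hS, Set.mem_setOf_eq, Set.mem_inter_iff, Set.mem_iInter, Set.mem_iUnion, Set.mem_iInter]
    constructor
    · rintro ⟨hpos, hsum, σ, hσ, hsupp⟩
      exact ⟨⟨hpos, hsum⟩, σ, hσ, fun v hv => by_contra fun h => hv (hsupp h)⟩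
    · rintro ⟨⟨hpos, hsum⟩, σ, hσ, hsupp⟩
      exact ⟨hpos, hsum, σ, hσ, fun v hv => by_contra fun h => hv (hsupp v h)⟩
  have h2 : IsClosed S := by
    rw [hrw]
    refine IsClosed.inter (IsClosed.inter ?_ ?_) ?_
    · exact isClosed_iInter fun v => isClosed_le continuous_const (continuous_apply v)
    · exact isClosed_eq (continuous_finset_sum (f := fun (v : V) (a : V → ℝ) => a v) Finset.univ fun v _ => continuous_apply v) continuous_const
    · refine Set.Finite.isClosed_biUnion (Set.toFinite K) (fun σ _ => ?_)
      refine isClosed_iInter fun v => ?_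
      by_cases hv : v ∈ σ
      · simp [hv]
      · have : {f : V → ℝ | v ∉ σ → f v = 0} = {f : V → ℝ | f v = 0} := by
          ext f; simp [hv]
        rw [this]
        exact isClosed_eq (continuous_apply v) continuous_const
  have h3 : IsCompact S :=
    (isCompact_univ_pi fun _ => isCompact_Icc).of_isClosed_subset h2 h1
  exact isCompact_iff_compactSpace.mp h3


/-- the third coordinate of the inverse block map -/
noncomputable def ccf (X Y : ℝ) : ℝ := max 0 (max (-X) (-Y))

/-- the inverse block map -/
noncomputable def cof (X Y : ℝ) : Fin 3 → ℝ := ![X + ccf X Y, Y + ccf X Y, ccf X Y]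

lemma ccf_nonneg (X Y : ℝ) : 0 ≤ ccf X Y := le_max_left _ _

lemma cof_nonneg (X Y : ℝ) : ∀ j, 0 ≤ cof X Y j := by
  intro j
  have h1 : -X ≤ ccf X Y := le_trans (le_max_left _ _) (le_max_right _ _)
  have h2 : -Y ≤ ccf X Y := le_trans (le_max_right _ _) (le_max_right _ _)
  fin_cases j
  · show 0 ≤ X + ccf X Y; linarith
  · show 0 ≤ Y + ccf X Y; linarith
  · exact ccf_nonneg X Y

lemma cof_exists_zero (X Y : ℝ) : ∃ j, cof X Y j = 0 := by
  rcases le_total (max (-X) (-Y)) 0 with h | h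
  · exact ⟨2, max_eq_left h⟩
  · have hc : ccf X Y = max (-X) (-Y) := max_eq_right h
    rcases le_total (-X) (-Y) with h2 | h2
    · refine ⟨1, ?_⟩
      show Y + ccf X Y = 0
      rw [hc, max_eq_right h2]; ring
    · refine ⟨0, ?_⟩
      show X + ccf X Y = 0
      rw [hc, max_eq_left h2]; ring

lemma cof_sub0 (X Y : ℝ) : cof X Y 0 - cof X Y 2 = X := by
  show (X + ccf X Y) - ccf X Y = X; ring

lemma cof_sub1 (X Y : ℝ) : cof X Y 1 - cof X Y 2 = Y := by
  show (Y + ccf X Y) - ccf X Y = Y; ring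

lemma cof_sum_zero (X Y : ℝ) (h : cof X Y 0 + cof X Y 1 + cof X Y 2 = 0) : X = 0 ∧ Y = 0 := by
  have h0 := cof_nonneg X Y 0
  have h1 := cof_nonneg X Y 1
  have h2 := cof_nonneg X Y 2
  have e0 : cof X Y 0 = 0 := by linarith
  have e1 : cof X Y 1 = 0 := by linarith
  have e2 : cof X Y 2 = 0 := by linarith
  have s0 := cof_sub0 X Y
  have s1 := cof_sub1 X Y
  constructor <;> linarith

open Finset in
lemma blocks_sphere {V : Type*} [Fintype V] [DecidableEq V] {m N : ℕ} (hm : 1 ≤ m)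
    (hN : N = 2 * m) (β : Fin m → Fin 3 → V)
    (hβ : Function.Injective fun p : Fin m × Fin 3 => β p.1 p.2)
    (K : Set (Finset V))
    (hK : ∀ σ : Finset V, σ ∈ K ↔
      ((∀ x ∈ σ, ∃ k j, β k j = x) ∧ ∀ k, ∃ j, β k j ∉ σ)) :
    Nonempty (ContinuousMap.HomotopyEquiv (realization K)
      ↥(Metric.sphere (0 : EuclideanSpace ℝ (Fin N)) 1)) := by
  classical
  subst hN
  -- index helpers
  set bk : Fin (2*m) → Fin m := fun i => ⟨i.1 / 2, by omega⟩ with hbk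
  set sel : Fin (2*m) → Fin 3 := fun i => if i.1 % 2 = 0 then 0 else 1 with hsel
  set i0 : Fin m → Fin (2*m) := fun k => ⟨2*k.1, by omega⟩ with hi0
  set i1 : Fin m → Fin (2*m) := fun k => ⟨2*k.1+1, by omega⟩ with hi1
  have hbk0 : ∀ k, bk (i0 k) = k := fun k => Fin.ext (by simp only [hbk, hi0]; omega)
  have hbk1 : ∀ k, bk (i1 k) = k := fun k => Fin.ext (by simp only [hbk, hi1]; omega)
  have hsel0 : ∀ k, sel (i0 k) = 0 := fun k => by
    simp only [hsel, hi0]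
    rw [if_pos (by omega)]
  have hsel1 : ∀ k, sel (i1 k) = 1 := fun k => by
    simp only [hsel, hi1]
    rw [if_neg (by omega)]
  have hi0bk : ∀ i : Fin (2*m), i.1 % 2 = 0 → i0 (bk i) = i := fun i h => Fin.ext (by
    simp only [hi0, hbk]; omega)
  have hi1bk : ∀ i : Fin (2*m), i.1 % 2 ≠ 0 → i1 (bk i) = i := fun i h => Fin.ext (by
    simp only [hi1, hbk]; omega)
  -- the coordinate map
  set w : (V → ℝ) → EuclideanSpace ℝ (Fin (2*m)) :=
    fun f => WithLp.toLp 2 (fun i => f (β (bk i) (sel i)) - f (β (bk i) 2)) with hw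
  -- basic membership facts
  have memfacts : ∀ f : V → ℝ, (∀ v, 0 ≤ f v) →
      ∀ σ ∈ K, {v | f v ≠ 0} ⊆ ↑σ →
      (∀ x, (¬ ∃ k j, β k j = x) → f x = 0) ∧
      (∀ k, f (β k 0) = 0 ∨ f (β k 1) = 0 ∨ f (β k 2) = 0) := by
    intro f hpos σ hσ hsupp
    obtain ⟨hrange, hmiss⟩ := (hK σ).mp hσ
    constructor
    · intro x hx
      by_contra h
      exact hx (hrange x (hsupp h))
    · intro k
      obtain ⟨j, hj⟩ := hmiss k
      have hfj : f (β k j) = 0 := by_contra fun h => hj (hsupp h)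
      fin_cases j
      · exact Or.inl hfj
      · exact Or.inr (Or.inl hfj)
      · exact Or.inr (Or.inr hfj)
  -- w f ≠ 0 on the realization
  have hwne : ∀ f : V → ℝ, (∀ v, 0 ≤ f v) → (∑ v, f v) = 1 →
      ∀ σ ∈ K, {v | f v ≠ 0} ⊆ ↑σ → w f ≠ 0 := by
    intro f hpos hsum σ hσ hsupp h0
    obtain ⟨hzero, hmiss⟩ := memfacts f hpos σ hσ hsupp
    have hfz : ∀ x, f x = 0 := by
      intro x
      by_cases hx : ∃ k j, β k j = x
      · obtain ⟨k, j, rfl⟩ := hx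
        have e0 : f (β k 0) - f (β k 2) = 0 := by
          have := congrArg (fun z => z (i0 k)) h0
          simpa [hw, hbk0, hsel0, PiLp.toLp_apply] using this
        have e1 : f (β k 1) - f (β k 2) = 0 := by
          have := congrArg (fun z => z (i1 k)) h0
          simpa [hw, hbk1, hsel1, PiLp.toLp_apply] using this
        have hall : f (β k 0) = 0 ∧ f (β k 1) = 0 ∧ f (β k 2) = 0 := by
          rcases hmiss k with h|h|h <;> exact ⟨by linarith, by linarith, by linarith⟩
        fin_cases j
        · exact hall.1
        · exact hall.2.1
        · exact hall.2.2
      · exact hzero x hx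
    rw [Finset.sum_congr rfl (fun x _ => hfz x)] at hsum
    simp at hsum
  have hwnorm : ∀ f : realization K, 0 < ‖w f.1‖ := by
    intro f
    obtain ⟨hpos, hsum, σ, hσ, hsupp⟩ := f.2
    exact norm_pos_iff.mpr (hwne f.1 hpos hsum σ hσ hsupp)
  -- the map to the sphere
  have hΦmem : ∀ f : realization K,
      (‖w f.1‖⁻¹ • w f.1) ∈ Metric.sphere (0 : EuclideanSpace ℝ (Fin (2*m))) 1 := by
    intro f
    rw [mem_sphere_zero_iff_norm, norm_smul, norm_inv, norm_norm]
    exact inv_mul_cancel₀ (ne_of_gt (hwnorm f))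
  set Φ : realization K → ↥(Metric.sphere (0 : EuclideanSpace ℝ (Fin (2*m))) 1) :=
    fun f => ⟨‖w f.1‖⁻¹ • w f.1, hΦmem f⟩ with hΦ
  -- continuity
  have hwcont : Continuous fun f : realization K => w f.1 := by
    have h1 : Continuous fun f : realization K =>
        (fun i => f.1 (β (bk i) (sel i)) - f.1 (β (bk i) 2) : Fin (2*m) → ℝ) := by
      apply continuous_pi
      intro i
      exact ((continuous_apply (β (bk i) (sel i))).comp continuous_subtype_val).sub
        ((continuous_apply (β (bk i) 2)).comp continuous_subtype_val)
    exact (PiLp.continuous_toLp 2 (fun _ : Fin (2*m) => ℝ)).comp h1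
  have hΦcont : Continuous Φ := by
    apply Continuous.subtype_mk
    exact (hwcont.norm.inv₀ (fun f => ne_of_gt (hwnorm f))).smul hwcont
  -- injectivity
  have hΦinj : Function.Injective Φ := by
    intro f1 f2 h
    have h' : ‖w f1.1‖⁻¹ • w f1.1 = ‖w f2.1‖⁻¹ • w f2.1 := congrArg Subtype.val h
    set c1 := ‖w f1.1‖⁻¹ with hc1d
    set c2 := ‖w f2.1‖⁻¹ with hc2d
    have hc1 : 0 < c1 := inv_pos.mpr (hwnorm f1)
    have hc2 : 0 < c2 := inv_pos.mpr (hwnorm f2)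
    obtain ⟨hpos1, hsum1, σ1, hσ1, hsupp1⟩ := f1.2
    obtain ⟨hpos2, hsum2, σ2, hσ2, hsupp2⟩ := f2.2
    obtain ⟨hzero1, hmiss1⟩ := memfacts f1.1 hpos1 σ1 hσ1 hsupp1
    obtain ⟨hzero2, hmiss2⟩ := memfacts f2.1 hpos2 σ2 hσ2 hsupp2
    have hblock : ∀ k : Fin m, ∀ j : Fin 3, c1 * f1.1 (β k j) = c2 * f2.1 (β k j) := by
      intro k
      have e0 : c1 * f1.1 (β k 0) - c1 * f1.1 (β k 2)
          = c2 * f2.1 (β k 0) - c2 * f2.1 (β k 2) := by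
        have := congrArg (fun z => z (i0 k)) h'
        simp only [PiLp.smul_apply, smul_eq_mul, hw, hbk0, hsel0, PiLp.toLp_apply] at this
        linear_combination this
      have e1 : c1 * f1.1 (β k 1) - c1 * f1.1 (β k 2)
          = c2 * f2.1 (β k 1) - c2 * f2.1 (β k 2) := by
        have := congrArg (fun z => z (i1 k)) h'
        simp only [PiLp.smul_apply, smul_eq_mul, hw, hbk1, hsel1, PiLp.toLp_apply] at this
        linear_combination this
      have hz1 : c1 * f1.1 (β k 0) = 0 ∨ c1 * f1.1 (β k 1) = 0 ∨ c1 * f1.1 (β k 2) = 0 := by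
        rcases hmiss1 k with h|h|h
        · exact Or.inl (by rw [h]; ring)
        · exact Or.inr (Or.inl (by rw [h]; ring))
        · exact Or.inr (Or.inr (by rw [h]; ring))
      have hz2 : c2 * f2.1 (β k 0) = 0 ∨ c2 * f2.1 (β k 1) = 0 ∨ c2 * f2.1 (β k 2) = 0 := by
        rcases hmiss2 k with h|h|h
        · exact Or.inl (by rw [h]; ring)
        · exact Or.inr (Or.inl (by rw [h]; ring))
        · exact Or.inr (Or.inr (by rw [h]; ring))
      have := tri (mul_nonneg hc1.le (hpos1 _)) (mul_nonneg hc1.le (hpos1 _))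
        (mul_nonneg hc1.le (hpos1 _)) (mul_nonneg hc2.le (hpos2 _))
        (mul_nonneg hc2.le (hpos2 _)) (mul_nonneg hc2.le (hpos2 _)) hz1 hz2 e0 e1
      intro j
      fin_cases j
      · exact this.1
      · exact this.2.1
      · exact this.2.2
    have hptw : ∀ x, c1 * f1.1 x = c2 * f2.1 x := by
      intro x
      by_cases hx : ∃ k j, β k j = x
      · obtain ⟨k, j, rfl⟩ := hx
        exact hblock k j
      · rw [hzero1 x hx, hzero2 x hx]; ring
    have hcc : c1 = c2 := by
      have : ∑ x, c1 * f1.1 x = ∑ x, c2 * f2.1 x := Finset.sum_congr rfl fun x _ => hptw x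
      rw [← Finset.mul_sum, ← Finset.mul_sum, hsum1, hsum2] at this
      simpa using this
    apply Subtype.ext
    funext x
    have := hptw x
    rw [hcc] at this
    exact mul_left_cancel₀ (ne_of_gt hc2) this
  -- surjectivity
  have hΦsurj : Function.Surjective Φ := by
    intro z
    set x : Fin m → ℝ := fun k => z.1 (i0 k) with hx
    set y : Fin m → ℝ := fun k => z.1 (i1 k) with hy
    set co : Fin m → Fin 3 → ℝ := fun k => cof (x k) (y k) with hco
    have hconn : ∀ k j, 0 ≤ co k j := fun k j => cof_nonneg (x k) (y k) j
    have hcozero : ∀ k, ∃ j : Fin 3, co k j = 0 := fun k => cof_exists_zero (x k) (y k)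
    set s : Fin m → ℝ := fun k => co k 0 + co k 1 + co k 2 with hs
    set S := ∑ k, s k with hS
    have hsnn : ∀ k, 0 ≤ s k := fun k => by
      have h0 := hconn k 0; have h1 := hconn k 1; have h2 := hconn k 2
      rw [hs]; dsimp only; linarith
    have hznorm : ‖z.1‖ = 1 := mem_sphere_zero_iff_norm.mp z.2
    have hSpos : 0 < S := by
      rcases eq_or_lt_of_le (Finset.sum_nonneg (fun k _ => hsnn k) : (0:ℝ) ≤ S) with h | h
      · exfalso
        have hallz : ∀ k ∈ Finset.univ, s k = 0 :=
          (Finset.sum_eq_zero_iff_of_nonneg (fun k _ => hsnn k)).mp h.symm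
        have hxy : ∀ k, x k = 0 ∧ y k = 0 := by
          intro k
          have h0 := hallz k (Finset.mem_univ k)
          rw [hs] at h0
          dsimp only at h0
          exact cof_sum_zero (x k) (y k) h0
        have : z.1 = 0 := by
          ext i
          by_cases hp : i.1 % 2 = 0
          · have := (hxy (bk i)).1
            simp only [hx] at this
            rw [hi0bk i hp] at this
            exact this
          · have := (hxy (bk i)).2
            simp only [hy] at this
            rw [hi1bk i hp] at this
            exact this
        rw [this] at hznorm
        simp at hznorm
      · exact h
    set g : V → ℝ := fun v => ∑ p : Fin m × Fin 3, if v = β p.1 p.2 then co p.1 p.2 else 0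
      with hg
    have hgval : ∀ k j, g (β k j) = co k j := by
      intro k j
      rw [hg]
      simp only
      rw [Finset.sum_eq_single (⟨k, j⟩ : Fin m × Fin 3)]
      · rw [if_pos rfl]
      · intro b _ hb
        rw [if_neg]
        intro hcontra
        exact hb (hβ (show (fun p : Fin m × Fin 3 => β p.1 p.2) b
          = (fun p : Fin m × Fin 3 => β p.1 p.2) (⟨k, j⟩ : Fin m × Fin 3) from hcontra.symm))
      · intro hnot
        exact absurd (Finset.mem_univ _) hnot
    have hgnn : ∀ v, 0 ≤ g v := by
      intro v
      apply Finset.sum_nonneg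
      intro p _
      split_ifs
      · exact hconn p.1 p.2
      · exact le_refl 0
    have hgzero : ∀ v, (¬ ∃ k j, β k j = v) → g v = 0 := by
      intro v hv
      rw [hg]
      apply Finset.sum_eq_zero
      intro p _
      rw [if_neg]
      intro hcontra
      exact hv ⟨p.1, p.2, hcontra.symm⟩
    have hgsum : (∑ v, g v) = S := by
      rw [hg]
      rw [Finset.sum_comm]
      have : ∀ p : Fin m × Fin 3, (∑ v, if v = β p.1 p.2 then co p.1 p.2 else 0) = co p.1 p.2 := by
        intro p
        rw [Finset.sum_ite_eq' Finset.univ (β p.1 p.2) (fun _ => co p.1 p.2)]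
        rw [if_pos (Finset.mem_univ _)]
      rw [Finset.sum_congr rfl (fun p _ => this p)]
      rw [Fintype.sum_prod_type]
      rw [hS]
      apply Finset.sum_congr rfl
      intro k _
      rw [Fin.sum_univ_three]
    set f : V → ℝ := fun v => S⁻¹ * g v with hf
    set σz : Finset V := Finset.univ.filter (fun v => g v ≠ 0) with hσz
    have hσzK : σz ∈ K := by
      rw [hK]
      constructor
      · intro v hv
        rw [hσz, Finset.mem_filter] at hv
        by_contra hc
        exact hv.2 (hgzero v hc)
      · intro k
        obtain ⟨j, hj⟩ := hcozero k
        refine ⟨j, ?_⟩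
        rw [hσz, Finset.mem_filter]
        push_neg
        intro _
        rw [hgval k j, hj]
    have hfmem : (∀ v, 0 ≤ f v) ∧ (∑ v, f v) = 1 ∧ {v | f v ≠ 0} ⊆ ↑σz := by
      refine ⟨fun v => mul_nonneg (inv_nonneg.mpr hSpos.le) (hgnn v), ?_, ?_⟩
      · rw [hf]
        simp only
        rw [← Finset.mul_sum, hgsum]
        exact inv_mul_cancel₀ (ne_of_gt hSpos)
      · intro v hv
        simp only [Set.mem_setOf_eq, hf] at hv
        rw [hσz]
        simp only [Finset.coe_filter, Set.mem_setOf_eq, Finset.mem_univ, true_and]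
        intro hgv
        exact hv (by rw [hgv]; ring)
    refine ⟨⟨f, ⟨hfmem.1, hfmem.2.1, σz, hσzK, hfmem.2.2⟩⟩, ?_⟩
    -- Φ of this equals z
    have hwf : w f = S⁻¹ • z.1 := by
      ext i
      show f (β (bk i) (sel i)) - f (β (bk i) 2) = (S⁻¹ • z.1) i
      rw [PiLp.smul_apply, smul_eq_mul]
      by_cases hp : i.1 % 2 = 0
      · have hseli : sel i = 0 := by
          rw [hsel]; simp only; rw [if_pos hp]
        rw [hseli, hf]
        simp only
        rw [hgval, hgval]
        have : co (bk i) 0 - co (bk i) 2 = x (bk i) := cof_sub0 (x (bk i)) (y (bk i))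
        rw [← mul_sub, this]
        simp only [hx]
        rw [hi0bk i hp]
      · have hseli : sel i = 1 := by
          rw [hsel]; simp only; rw [if_neg hp]
        rw [hseli, hf]
        simp only
        rw [hgval, hgval]
        have : co (bk i) 1 - co (bk i) 2 = y (bk i) := cof_sub1 (x (bk i)) (y (bk i))
        rw [← mul_sub, this]
        simp only [hy]
        rw [hi1bk i hp]
    apply Subtype.ext
    show ‖w f‖⁻¹ • w f = z.1
    rw [hwf, norm_smul, norm_inv, Real.norm_eq_abs, abs_of_pos hSpos, hznorm, mul_one,
      inv_inv, smul_smul, mul_inv_cancel₀ (ne_of_gt hSpos), one_smul]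
  -- assemble
  haveI := realization_compactSpace K
  have hhomeo : Nonempty (realization K ≃ₜ
      ↥(Metric.sphere (0 : EuclideanSpace ℝ (Fin (2*m))) 1)) := by
    refine ⟨Continuous.homeoOfEquivCompactToT2
      (f := Equiv.ofBijective Φ ⟨hΦinj, hΦsurj⟩) hΦcont⟩
  exact ⟨hhomeo.some.toHomotopyEquiv⟩


/-- a graph in which every vertex has at most one neighbour is acyclic -/
lemma acyclic_of_unique_nbr {W : Type*} (H : SimpleGraph W)
    (h : ∀ v a b : W, H.Adj v a → H.Adj v b → a = b) : H.IsAcyclic := by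
  intro v p hp
  match p, hp with
  | .nil, hp => exact SimpleGraph.Walk.IsCycle.not_of_nil hp
  | .cons h1 .nil, hp => exact H.loopless.irrefl v h1
  | .cons (v := b) h1 (.cons (v := c) h2 q2), hp =>
    have hvc : v = c := h b v c h1.symm h2
    subst hvc
    have hnodup := hp.isCircuit.isTrail.edges_nodup
    simp only [SimpleGraph.Walk.edges_cons, List.nodup_cons] at hnodup
    exact hnodup.1 (List.mem_cons.mpr (Or.inl Sym2.eq_swap))

/-- membership in the 1-forest complex is equivalent to each vertex having at
most one neighbour inside the set -/
lemma mem_forestComplex_one {V : Type*} [Fintype V] (G : SimpleGraph V) (σ : Finset V) :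
    σ ∈ forestComplex G 1 ↔
      ∀ v ∈ σ, ∀ a ∈ σ, ∀ b ∈ σ, G.Adj v a → G.Adj v b → a = b := by
  constructor
  · rintro ⟨-, hdeg⟩ v hv a ha b hb hva hvb
    have hfin : ({u | u ∈ σ ∧ G.Adj v u} : Set V).Finite := Set.toFinite _
    have hcard : ({u | u ∈ σ ∧ G.Adj v u} : Set V).ncard ≤ 1 := by
      have := hdeg v hv
      exact_mod_cast this
    exact (Set.ncard_le_one hfin).mp hcard a ⟨ha, hva⟩ b ⟨hb, hvb⟩
  · intro h
    constructor
    · apply acyclic_of_unique_nbr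
      rintro ⟨x, hx⟩ ⟨a, ha⟩ ⟨b, hb⟩ hxa hxb
      have hax : G.Adj x a := hxa
      have hbx : G.Adj x b := hxb
      exact Subtype.ext (h x (by simpa using hx) a (by simpa using ha) b (by simpa using hb) hax hbx)
    · intro v hv
      have : ({u | u ∈ σ ∧ G.Adj v u} : Set V).ncard ≤ 1 := by
        apply (Set.ncard_le_one (Set.toFinite _)).mpr
        rintro a ⟨ha, hva⟩ b ⟨hb, hvb⟩
        exact h v hv a ha b hb hva hvb
      exact_mod_cast this


/-- `j`-th vertex belongs to `σ` -/
def memv {n : ℕ} (σ : Finset (Fin n)) (j : ℕ) : Prop := ∃ h : j < n, (⟨j, h⟩ : Fin n) ∈ σ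

lemma memv_of_mem {n : ℕ} {σ : Finset (Fin n)} {x : Fin n} (hx : x ∈ σ) : memv σ x.1 :=
  ⟨x.2, by simpa using hx⟩

lemma memv_insert {n : ℕ} {σ : Finset (Fin n)} {x : Fin n} {j : ℕ} [DecidableEq (Fin n)] :
    memv (insert x σ) j ↔ (j < n ∧ j = x.1) ∨ memv σ j := by
  constructor
  · rintro ⟨h, hm⟩
    rcases Finset.mem_insert.mp hm with h1 | h1
    · exact Or.inl ⟨h, by rw [← h1]⟩
    · exact Or.inr ⟨h, h1⟩
  · rintro (⟨h, rfl⟩ | ⟨h, hm⟩)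
    · exact ⟨h, by simpa using Finset.mem_insert.mpr (Or.inl (Fin.ext rfl))⟩
    · exact ⟨h, Finset.mem_insert.mpr (Or.inr hm)⟩

/-- no-three-consecutive characterization of `F_1` of a path -/
lemma mem_F_path {n : ℕ} (σ : Finset (Fin n)) :
    σ ∈ forestComplex (SimpleGraph.pathGraph n) 1 ↔
      ∀ i : ℕ, ¬(memv σ i ∧ memv σ (i+1) ∧ memv σ (i+2)) := by
  rw [mem_forestComplex_one]
  constructor
  · rintro h i ⟨⟨h0, m0⟩, ⟨h1, m1⟩, ⟨h2, m2⟩⟩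
    have hadj1 : (SimpleGraph.pathGraph n).Adj ⟨i+1, h1⟩ ⟨i, h0⟩ := by
      rw [SimpleGraph.pathGraph_adj]; right; rfl
    have hadj2 : (SimpleGraph.pathGraph n).Adj ⟨i+1, h1⟩ ⟨i+2, h2⟩ := by
      rw [SimpleGraph.pathGraph_adj]; left; rfl
    have := h _ m1 _ m0 _ m2 hadj1 hadj2
    have := Fin.mk.injEq .. ▸ this
    omega
  · intro h v hv a ha b hb hva hvb
    rw [SimpleGraph.pathGraph_adj] at hva hvb
    by_cases hab : a.1 = b.1
    · exact Fin.ext hab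
    · exfalso
      have hv1 : 1 ≤ v.1 := by omega
      apply h (v.1 - 1)
      have hval : (a.1 = v.1 - 1 ∧ b.1 = v.1 + 1) ∨ (b.1 = v.1 - 1 ∧ a.1 = v.1 + 1) := by
        omega
      have hmv : memv σ v.1 := memv_of_mem hv
      have hma : memv σ a.1 := memv_of_mem ha
      have hmb : memv σ b.1 := memv_of_mem hb
      rcases hval with ⟨e1, e2⟩ | ⟨e1, e2⟩
      · refine ⟨e1 ▸ hma, ?_, ?_⟩
        · have : v.1 - 1 + 1 = v.1 := by omega
          rw [this]; exact hmv
        · have : v.1 - 1 + 2 = b.1 := by omega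
          rw [this]; exact hmb
      · refine ⟨e1 ▸ hmb, ?_, ?_⟩
        · have : v.1 - 1 + 1 = v.1 := by omega
          rw [this]; exact hmv
        · have : v.1 - 1 + 2 = a.1 := by omega
          rw [this]; exact hma

/-- the forest complex of a path is downward closed -/
lemma F_path_down {n : ℕ} {σ τ : Finset (Fin n)}
    (hσ : σ ∈ forestComplex (SimpleGraph.pathGraph n) 1) (hτ : τ ⊆ σ) :
    τ ∈ forestComplex (SimpleGraph.pathGraph n) 1 := by
  rw [mem_F_path] at hσ ⊢
  intro i ⟨m0, m1, m2⟩
  exact hσ i ⟨⟨m0.1, hτ m0.2⟩, ⟨m1.1, hτ m1.2⟩, ⟨m2.1, hτ m2.2⟩⟩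

/-- the key domination step: with vertex `q` missing (or out of range) and
`q-4` present, inserting vertex `q-1` keeps us in the complex -/
lemma stage_dom {n q : ℕ} (h4 : 4 ≤ q) (hqn : q ≤ n) {σ : Finset (Fin n)}
    (hσ : σ ∈ forestComplex (SimpleGraph.pathGraph n) 1)
    (hv4 : memv σ (q-4)) (hqnot : ¬ memv σ q) (uu : Fin n) (huu : uu.1 = q - 1) :
    insert uu σ ∈ forestComplex (SimpleGraph.pathGraph n) 1 := by
  classical
  rw [mem_F_path] at hσ ⊢
  intro i ⟨m0, m1, m2⟩
  rw [memv_insert] at m0 m1 m2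
  rw [huu] at m0 m1 m2
  rcases m0 with ⟨hb0, he0⟩ | m0
  · -- i = q - 1, so i+1 = q ∈ σ : contradiction
    rcases m1 with ⟨hb1, he1⟩ | m1
    · omega
    · have : i + 1 = q := by omega
      exact hqnot (this ▸ m1)
  · rcases m1 with ⟨hb1, he1⟩ | m1
    · -- i + 1 = q - 1, so i+2 = q ∈ σ
      rcases m2 with ⟨hb2, he2⟩ | m2
      · omega
      · have : i + 2 = q := by omega
        exact hqnot (this ▸ m2)
    · rcases m2 with ⟨hb2, he2⟩ | m2
      · -- i + 2 = q - 1 : then q-4, q-3, q-2 all in σ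
        apply hσ (q - 4)
        have e1 : q - 4 + 1 = i := by omega
        have e2 : q - 4 + 2 = i + 1 := by omega
        exact ⟨hv4, e1 ▸ m0, e2 ▸ m1⟩
      · exact hσ i ⟨m0, m1, m2⟩


/-- the stage conditions for the collapse iteration along a path -/
lemma path_stages {n : ℕ} (hn0 : 0 < n) (k : ℕ) (hkn : 4*k ≤ n) :
    (∀ j < k, ∀ i ≤ j,
      (⟨n - 4*j - 1, by omega⟩ : Fin n) ≠ (⟨n - 4*(i+1), by omega⟩ : Fin n)) ∧
    (∀ j < k, ∀ σ ∈ forestComplex (SimpleGraph.pathGraph n) 1,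
      (∀ i < j, (⟨n - 4*(i+1), by omega⟩ : Fin n) ∉ σ) →
      (⟨n - 4*(j+1), by omega⟩ : Fin n) ∈ σ →
      insert (⟨n - 4*j - 1, by omega⟩ : Fin n) σ ∈
        forestComplex (SimpleGraph.pathGraph n) 1) := by
  constructor
  · intro j hj i hi h
    have := congrArg Fin.val h
    simp only at this
    omega
  · intro j hj σ hσ hav hdj
    have h4 : 4 ≤ n - 4*j := by omega
    have hm : memv σ (n - 4*(j+1)) := memv_of_mem hdj
    rw [show n - 4*(j+1) = n - 4*j - 4 from by omega] at hm
    refine stage_dom h4 (by omega) hσ hm ?_ _ rfl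
    rintro ⟨hlt, hmem⟩
    have hj1 : 1 ≤ j := by omega
    apply hav (j-1) (by omega)
    have he : (⟨n - 4*(j-1+1), by omega⟩ : Fin n) = ⟨n - 4*j, hlt⟩ :=
      Fin.ext (by simp only; omega)
    rw [he]
    exact hmem

/-- identification of the residual complex with the blocks complex -/
lemma blocks_id {n m o k : ℕ} (ho : o ≤ 1) (hk : n = 4*k + 3*(1-o)) (hm : m = k + (1-o))
    (hm1 : 1 ≤ m) (σ : Finset (Fin n)) :
    (σ ∈ forestComplex (SimpleGraph.pathGraph n) 1 ∧
      ∀ j < k, (⟨n - 4*(j+1), by omega⟩ : Fin n) ∉ σ) ↔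
    ((∀ x ∈ σ, ∃ (kk : Fin m) (jj : Fin 3),
        (⟨4*kk.1 + jj.1 + o, by omega⟩ : Fin n) = x) ∧
      ∀ kk : Fin m, ∃ jj : Fin 3, (⟨4*kk.1 + jj.1 + o, by omega⟩ : Fin n) ∉ σ) := by
  constructor
  · rintro ⟨hF, hav⟩
    constructor
    · intro x hx
      set t := x.1 with ht
      have htn : t < n := x.2
      by_cases hbad : (t + 1 - o) % 4 = 0
      · exfalso
        -- t is one of the deleted vertices
        have hex : ∃ j, j < k ∧ t = n - 4*(j+1) := by
          refine ⟨(n - t)/4 - 1, by omega, by omega⟩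
        obtain ⟨j, hjk, hjt⟩ := hex
        apply hav j hjk
        have : (⟨n - 4*(j+1), by omega⟩ : Fin n) = x := Fin.ext (by simp only; omega)
        rw [this]
        exact hx
      · refine ⟨⟨(t-o)/4, by omega⟩, ⟨(t-o)%4, by omega⟩, Fin.ext ?_⟩
        simp only
        omega
    · intro kk
      by_contra hcon
      push_neg at hcon
      rw [mem_F_path] at hF
      apply hF (4*kk.1 + o)
      have h0 := memv_of_mem (hcon 0)
      have h1 := memv_of_mem (hcon 1)
      have h2 := memv_of_mem (hcon 2)
      simp only at h0 h1 h2
      refine ⟨?_, ?_, ?_⟩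
      · rw [show 4*kk.1 + o = 4*kk.1 + 0 + o from by omega]; exact h0
      · rw [show 4*kk.1 + o + 1 = 4*kk.1 + 1 + o from by omega]; exact h1
      · rw [show 4*kk.1 + o + 2 = 4*kk.1 + 2 + o from by omega]; exact h2
  · rintro ⟨hrange, hmiss⟩
    constructor
    · rw [mem_F_path]
      rintro i ⟨⟨hb0, hx0⟩, ⟨hb1, hx1⟩, ⟨hb2, hx2⟩⟩
      obtain ⟨k0, j0, he0⟩ := hrange _ hx0
      obtain ⟨k1, j1, he1⟩ := hrange _ hx1
      obtain ⟨k2, j2, he2⟩ := hrange _ hx2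
      have hv0 := congrArg Fin.val he0
      have hv1 := congrArg Fin.val he1
      have hv2 := congrArg Fin.val he2
      simp only at hv0 hv1 hv2
      have hj0 : j0.1 ≤ 2 := by omega
      have hdec : k1.1 = k0.1 ∧ k2.1 = k0.1 ∧ j0.1 = 0 ∧ j1.1 = 1 ∧ j2.1 = 2 := by
        have := j0.2; have := j1.2; have := j2.2
        omega
      obtain ⟨jj, hjj⟩ := hmiss k0
      apply hjj
      have hjv : jj.1 ≤ 2 := by omega
      rcases show jj.1 = 0 ∨ jj.1 = 1 ∨ jj.1 = 2 from by omega with h | h | h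
      · have : (⟨4*k0.1 + jj.1 + o, by omega⟩ : Fin n) = ⟨i, hb0⟩ :=
          Fin.ext (by simp only; omega)
        rw [this]; exact hx0
      · have : (⟨4*k0.1 + jj.1 + o, by omega⟩ : Fin n) = ⟨i+1, hb1⟩ :=
          Fin.ext (by simp only; omega)
        rw [this]; exact hx1
      · have : (⟨4*k0.1 + jj.1 + o, by omega⟩ : Fin n) = ⟨i+2, hb2⟩ :=
          Fin.ext (by simp only; omega)
        rw [this]; exact hx2
    · intro j hjk hmem
      obtain ⟨kk, jj, he⟩ := hrange _ hmem
      have := congrArg Fin.val he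
      simp only at this
      have := jj.2
      omega


open ContinuousMap in
lemma collapse_iter {V : Type*} [Fintype V] [DecidableEq V] (K : Set (Finset V))
    (hdown : ∀ σ ∈ K, ∀ τ, τ ⊆ σ → τ ∈ K) (d u : ℕ → V) :
    ∀ k : ℕ,
    (∀ j < k, ∀ i ≤ j, u j ≠ d i) →
    (∀ j < k, ∀ σ ∈ K, (∀ i < j, d i ∉ σ) → d j ∈ σ → insert (u j) σ ∈ K) →
    Nonempty (HomotopyEquiv (realization K) (realization {σ ∈ K | ∀ j < k, d j ∉ σ})) := by
  intro k
  induction k with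
  | zero =>
    intro _ _
    have hEq : {σ ∈ K | ∀ j < 0, d j ∉ σ} = K := by
      ext σ; simp
    rw [hEq]
    exact ⟨ContinuousMap.HomotopyEquiv.refl _⟩
  | succ k ih =>
    intro hne hdom
    obtain ⟨e1⟩ := ih (fun j hj i hi => hne j (by omega) i hi)
      (fun j hj σ hσ => hdom j (by omega) σ hσ)
    set Kk : Set (Finset V) := {σ ∈ K | ∀ j < k, d j ∉ σ} with hKk
    have hdownk : ∀ σ ∈ Kk, ∀ τ, τ ⊆ σ → τ ∈ Kk := by
      rintro σ ⟨hσK, hσav⟩ τ hτ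
      exact ⟨hdown σ hσK τ hτ, fun j hj hmem => hσav j hj (hτ hmem)⟩
    have hdomk : ∀ σ ∈ Kk, d k ∈ σ → insert (u k) σ ∈ Kk := by
      rintro σ ⟨hσK, hσav⟩ hdk
      refine ⟨hdom k (by omega) σ hσK (fun i hi => hσav i hi) hdk, ?_⟩
      intro j hj hmem
      rcases Finset.mem_insert.mp hmem with h | h
      · exact hne k (by omega) j (by omega) h.symm
      · exact hσav j hj h
    obtain ⟨e2⟩ := strong_collapse Kk (u k) (d k)
      (hne k (by omega) k le_rfl) hdomk hdownk
    have hEq : {σ ∈ Kk | d k ∉ σ} = {σ ∈ K | ∀ j < k + 1, d j ∉ σ} := by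
      ext σ
      simp only [Set.mem_setOf_eq, hKk]
      constructor
      · rintro ⟨⟨h1, h2⟩, h3⟩
        refine ⟨h1, fun j hj => ?_⟩
        rcases Nat.lt_succ_iff_lt_or_eq.mp hj with h | h
        · exact h2 j h
        · exact h ▸ h3
      · rintro ⟨h1, h2⟩
        exact ⟨⟨h1, fun j hj => h2 j (by omega)⟩, h2 k (by omega)⟩
    rw [hEq] at e2
    exact ⟨e1.trans e2⟩


/-- the contractible cases `n = 4r+1` and `n = 4r+2` -/
lemma case12 {n r : ℕ} (hn : n = 4*r+1 ∨ n = 4*r+2) :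
    ContractibleSpace (realization (forestComplex (SimpleGraph.pathGraph n) 1)) := by
  classical
  have hn0 : 0 < n := by omega
  have hkn : 4*r ≤ n := by omega
  obtain ⟨hne, hdom⟩ := path_stages hn0 r hkn
  set d : ℕ → Fin n := fun j => ⟨n - 4*(j+1), by omega⟩ with hd
  set u : ℕ → Fin n := fun j => ⟨n - 4*j - 1, by omega⟩ with hu
  obtain ⟨e⟩ := collapse_iter (forestComplex (SimpleGraph.pathGraph n) 1)
    (fun σ hσ τ hτ => F_path_down hσ hτ) d u r hne
    (by intro j hj σ hσ hav hdj; exact hdom j hj σ hσ hav hdj)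
  set Kr : Set (Finset (Fin n)) :=
    {σ ∈ forestComplex (SimpleGraph.pathGraph n) 1 | ∀ j < r, d j ∉ σ} with hKr
  have : ContractibleSpace (realization Kr) := by
    apply cone_contractible Kr ⟨0, hn0⟩
    · rintro σ ⟨hσF, hσav⟩
      constructor
      · -- F-membership of insert
        rw [mem_F_path] at hσF ⊢
        rintro i ⟨m0, m1, m2⟩
        rw [memv_insert] at m0 m1 m2
        simp only at m0 m1 m2
        have hm1' : memv σ (i+1) := by
          rcases m1 with ⟨_, h⟩ | h
          · omega
          · exact h
        have hm2' : memv σ (i+2) := by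
          rcases m2 with ⟨_, h⟩ | h
          · omega
          · exact h
        rcases m0 with ⟨_, hi0⟩ | m0
        · -- i = 0 : vertices 1 and 2 in σ
          subst hi0
          have hr1 : 1 ≤ r := by
            obtain ⟨hb, _⟩ := hm2'
            omega
          set t : ℕ := n - 4*r with htdef
          have htb : t < n := by omega
          have hmt : memv σ t := by
            rcases show t = 1 ∨ t = 2 from by omega with h | h
            · rw [h]; exact hm1'
            · rw [h]; exact hm2'
          obtain ⟨hb, hmem⟩ := hmt
          apply hσav (r-1) (by omega)
          have : d (r-1) = ⟨t, hb⟩ := Fin.ext (by simp only [hd]; omega)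
          rw [this]
          exact hmem
        · exact hσF i ⟨m0, hm1', hm2'⟩
      · -- avoidance
        intro j hj hmem
        rcases Finset.mem_insert.mp hmem with h | h
        · have := congrArg Fin.val h
          simp only [hd] at this
          omega
        · exact hσav j hj h
    · refine ⟨∅, ?_, by simp⟩
      rw [mem_F_path]
      rintro i ⟨⟨_, h⟩, _⟩
      simp at h
  exact e.contractibleSpace

/-- the sphere cases: `o = 1` gives `n = 4k` with `m = k` blocks, `o = 0` gives
`n = 4k+3` with `m = k+1` blocks -/
lemma case_sphere {n m o k N : ℕ} (ho : o ≤ 1) (hk : n = 4*k + 3*(1-o))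
    (hm : m = k + (1-o)) (hm1 : 1 ≤ m) (hN : N = 2*m) :
    Nonempty (ContinuousMap.HomotopyEquiv
      (realization (forestComplex (SimpleGraph.pathGraph n) 1))
      ↥(Metric.sphere (0 : EuclideanSpace ℝ (Fin N)) 1)) := by
  classical
  have hn0 : 0 < n := by omega
  have hkn : 4*k ≤ n := by omega
  obtain ⟨hne, hdom⟩ := path_stages hn0 k hkn
  set d : ℕ → Fin n := fun j => ⟨n - 4*(j+1), by omega⟩ with hd
  set u : ℕ → Fin n := fun j => ⟨n - 4*j - 1, by omega⟩ with hu
  obtain ⟨e⟩ := collapse_iter (forestComplex (SimpleGraph.pathGraph n) 1)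
    (fun σ hσ τ hτ => F_path_down hσ hτ) d u k hne
    (by intro j hj σ hσ hav hdj; exact hdom j hj σ hσ hav hdj)
  set Kk : Set (Finset (Fin n)) :=
    {σ ∈ forestComplex (SimpleGraph.pathGraph n) 1 | ∀ j < k, d j ∉ σ} with hKk
  set β : Fin m → Fin 3 → Fin n := fun kk jj => ⟨4*kk.1 + jj.1 + o, by omega⟩ with hβd
  have hβ : Function.Injective fun p : Fin m × Fin 3 => β p.1 p.2 := by
    rintro ⟨k1, j1⟩ ⟨k2, j2⟩ h
    have := congrArg Fin.val h
    simp only [hβd] at this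
    have h1 := j1.2
    have h2 := j2.2
    have : k1.1 = k2.1 ∧ j1.1 = j2.1 := by omega
    simp only [Prod.mk.injEq]
    exact ⟨Fin.ext this.1, Fin.ext this.2⟩
  obtain ⟨e2⟩ := blocks_sphere hm1 hN β hβ Kk (fun σ => blocks_id ho hk hm hm1 σ)
  exact ⟨e.trans e2⟩

/-- The homotopy type of `F_1(P_n)`: a sphere `S^{2r−1}` for `n = 4r` (`r ≥ 1`), a point
for `n = 4r+1` and `n = 4r+2`, and a sphere `S^{2r+1}` for `n = 4r+3`. -/
theorem forestComplex_one_pathGraph (r : ℕ) :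
    (1 ≤ r → Nonempty (ContinuousMap.HomotopyEquiv
      (realization (forestComplex (SimpleGraph.pathGraph (4 * r)) 1)) (Sphere (2 * r - 1)))) ∧
    ContractibleSpace (realization (forestComplex (SimpleGraph.pathGraph (4 * r + 1)) 1)) ∧
    ContractibleSpace (realization (forestComplex (SimpleGraph.pathGraph (4 * r + 2)) 1)) ∧
    Nonempty (ContinuousMap.HomotopyEquiv
      (realization (forestComplex (SimpleGraph.pathGraph (4 * r + 3)) 1)) (Sphere (2 * r + 1))) := by
  refine ⟨?_, ?_, ?_, ?_⟩
  · intro hr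
    have h := case_sphere (n := 4*r) (m := r) (o := 1) (k := r) (N := 2*r)
      (by omega) (by omega) (by omega) hr rfl
    rw [show 2*r = 2*r - 1 + 1 from by omega] at h
    exact h
  · exact case12 (Or.inl rfl)
  · exact case12 (Or.inr rfl)
  · have h := case_sphere (n := 4*r+3) (m := r+1) (o := 0) (k := r) (N := 2*(r+1))
      (by omega) (by omega) (by omega) (by omega) rfl
    rw [show 2*(r+1) = 2*r + 1 + 1 from by omega] at h
    exact h
end
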